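/- Let A be an associative unital algebra and T ∈ A⊗A⊗A an element commuting with S_a = u⊗u⊗a + u⊗a⊗u + a⊗u⊗u for every a ∈ A. Then T commutes with every fully symmetric tensor X ∈ A⊗A⊗A (i.e. every X invariant under all permutations of the three tensor factors). -/

import Mathlib

set_option maxHeartbeats 1000000


open TensorProduct

/-- If `T ∈ A ⊗ A ⊗ A` commutes with `S a = 1⊗1⊗a + 1⊗a⊗1 + a⊗1⊗1` for every
`a : A`, then `T` commutes with every fully symmetric tensor, i.e. every element
of the span of the symmetrized elementary tensors. -/
theorem commutes_with_S_implies_commutes_with_symmetric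
    (A : Type*) [Ring A] [Algebra ℝ A]
    (S : A → A ⊗[ℝ] (A ⊗[ℝ] A))
    (hS : ∀ a : A, S a = (1 : A) ⊗ₜ[ℝ] ((1 : A) ⊗ₜ[ℝ] a)
      + (1 : A) ⊗ₜ[ℝ] (a ⊗ₜ[ℝ] (1 : A)) + a ⊗ₜ[ℝ] ((1 : A) ⊗ₜ[ℝ] (1 : A)))
    (T : A ⊗[ℝ] (A ⊗[ℝ] A))
    (hT : ∀ a : A, T * S a = S a * T) :
    ∀ X : A ⊗[ℝ] (A ⊗[ℝ] A),
      X ∈ Submodule.span ℝ {Y : A ⊗[ℝ] (A ⊗[ℝ] A) | ∃ a b c : A,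
        Y = a ⊗ₜ[ℝ] (b ⊗ₜ[ℝ] c) + b ⊗ₜ[ℝ] (c ⊗ₜ[ℝ] a) + c ⊗ₜ[ℝ] (a ⊗ₜ[ℝ] b)
          + a ⊗ₜ[ℝ] (c ⊗ₜ[ℝ] b) + c ⊗ₜ[ℝ] (b ⊗ₜ[ℝ] a) + b ⊗ₜ[ℝ] (a ⊗ₜ[ℝ] c)} →
      T * X = X * T := by
  -- T commutes with every element of the commutant submodule
  intro X hX
  have key : ∀ a b c : A,
      a ⊗ₜ[ℝ] (b ⊗ₜ[ℝ] c) + b ⊗ₜ[ℝ] (c ⊗ₜ[ℝ] a) + c ⊗ₜ[ℝ] (a ⊗ₜ[ℝ] b)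
        + a ⊗ₜ[ℝ] (c ⊗ₜ[ℝ] b) + c ⊗ₜ[ℝ] (b ⊗ₜ[ℝ] a) + b ⊗ₜ[ℝ] (a ⊗ₜ[ℝ] c)
      = S a * S b * S c - S (a*b) * S c - S (a*c) * S b - S (b*c) * S a
        + S (a*c*b) + S (b*c*a) := by
    intro a b c
    simp only [hS, mul_add, add_mul, Algebra.TensorProduct.tmul_mul_tmul,
      one_mul, mul_one]
    abel
  -- build a Commute statement
  have hc : ∀ Y ∈ {Y : A ⊗[ℝ] (A ⊗[ℝ] A) | ∃ a b c : A,
        Y = a ⊗ₜ[ℝ] (b ⊗ₜ[ℝ] c) + b ⊗ₜ[ℝ] (c ⊗ₜ[ℝ] a) + c ⊗ₜ[ℝ] (a ⊗ₜ[ℝ] b)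
          + a ⊗ₜ[ℝ] (c ⊗ₜ[ℝ] b) + c ⊗ₜ[ℝ] (b ⊗ₜ[ℝ] a) + b ⊗ₜ[ℝ] (a ⊗ₜ[ℝ] c)},
      Commute T Y := by
    rintro Y ⟨a, b, c, rfl⟩
    rw [key a b c]
    have h : ∀ x : A, Commute T (S x) := fun x => hT x
    have h1 : Commute T (S a * S b * S c) := ((h a).mul_right (h b)).mul_right (h c)
    have h2 : Commute T (S (a*b) * S c) := (h (a*b)).mul_right (h c)
    have h3 : Commute T (S (a*c) * S b) := (h (a*c)).mul_right (h b)
    have h4 : Commute T (S (b*c) * S a) := (h (b*c)).mul_right (h a)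
    exact ((((h1.sub_right h2).sub_right h3).sub_right h4).add_right
      (h (a*c*b))).add_right (h (b*c*a))
  -- span induction
  refine Submodule.span_induction (p := fun Y _ => T * Y = Y * T) ?_ ?_ ?_ ?_ hX
  · exact fun Y hY => hc Y hY
  · simp
  · intro x y _ _ hx hy; rw [mul_add, add_mul, hx, hy]
  · intro r x _ hx; rw [mul_smul_comm, smul_mul_assoc, hx]
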